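/- For every inner function u and all φ, ψ ∈ C(𝕋), the semicommutator A_φ^u A_ψ^u − A_{φψ}^u is a compact operator on K_u; in particular, the commutator [A_φ^u, A_ψ^u] = A_φ^u A_ψ^u − A_ψ^u A_φ^u is compact. -/

import Mathlib

noncomputable section

open MeasureTheory Complex Filter Topology Set ContinuousLinearMap
open scoped ENNReal NNReal ComplexConjugate

set_option maxHeartbeats 1000000
set_option synthInstance.maxHeartbeats 1000000

namespace TTOPaper

instance fact2pi : Fact (0 < 2 * Real.pi) := ⟨by positivity⟩

/-- The circle, modelled additively as `ℝ / 2πℤ`. -/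
abbrev T2π : Type := AddCircle (2 * Real.pi)

/-- Normalized arc-length (Haar) measure on the circle. -/
abbrev μ : Measure T2π := AddCircle.haarAddCircle

/-- `L²(𝕋)`. -/
abbrev Ltwo := Lp ℂ 2 μ

/-- The identity function `z ↦ z` on the circle, i.e. `θ ↦ e^{iθ}`. -/
def zfun : T2π → ℂ := fun θ => (AddCircle.toCircle θ : ℂ)

lemma continuous_zfun : Continuous zfun :=
  continuous_subtype_val.comp AddCircle.continuous_toCircle

/-- A continuous function on the (compact) circle is essentially bounded. -/
lemma memLinfty_of_continuous {f : T2π → ℂ} (hf : Continuous f) : MemLp f ⊤ μ :=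
  hf.memLp_top_of_hasCompactSupport
    (IsCompact.of_isClosed_subset isCompact_univ (isClosed_tsupport f) (Set.subset_univ _)) μ

lemma memLinfty_contMap (φ : C(T2π, ℂ)) : MemLp (⇑φ) ⊤ μ :=
  memLinfty_of_continuous φ.continuous

lemma memLinfty_zfun : MemLp zfun ⊤ μ := memLinfty_of_continuous continuous_zfun

/-- Pointwise product of two essentially bounded functions is essentially bounded. -/
lemma memLinfty_mul {φ ψ : T2π → ℂ} (hφ : MemLp φ ⊤ μ) (hψ : MemLp ψ ⊤ μ) :
    MemLp (fun θ => φ θ * ψ θ) ⊤ μ := by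
  have h : MemLp (φ • ψ) ⊤ μ := MemLp.smul hψ hφ
  exact h.congr_norm (hφ.1.mul hψ.1) (Filter.Eventually.of_forall fun θ => by
    simp [Pi.smul_apply', smul_eq_mul])

/-- Complex conjugate of an essentially bounded function is essentially bounded. -/
lemma memLinfty_conj {f : T2π → ℂ} (hf : MemLp f ⊤ μ) :
    MemLp (fun θ => (starRingEnd ℂ) (f θ)) ⊤ μ :=
  hf.congr_norm (Complex.continuous_conj.comp_aestronglyMeasurable hf.1)
    (Filter.Eventually.of_forall fun θ => by simp)

/-- Multiplication operator `M_φ : L² → L²` by an essentially bounded symbol `φ`. -/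
def mulCLM (φ : T2π → ℂ) (hφ : MemLp φ ⊤ μ) : Ltwo →L[ℂ] Ltwo :=
  LinearMap.mkContinuous
    { toFun := fun f => MemLp.toLp (φ • (⇑f : T2π → ℂ)) ((Lp.memLp f).smul hφ)
      map_add' := fun f g => by
        have h1 : (φ • (⇑(f + g) : T2π → ℂ)) =ᵐ[μ]
            (φ • (⇑f : T2π → ℂ)) + (φ • (⇑g : T2π → ℂ)) := by
          filter_upwards [Lp.coeFn_add f g] with x hx
          simp only [Pi.smul_apply', Pi.add_apply, hx, smul_add]
        exact (MemLp.toLp_congr _ (((Lp.memLp f).smul hφ).add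
          ((Lp.memLp g).smul hφ)) h1).trans (MemLp.toLp_add _ _)
      map_smul' := fun c f => by
        have h1 : (φ • (⇑(c • f) : T2π → ℂ)) =ᵐ[μ] c • (φ • (⇑f : T2π → ℂ)) := by
          filter_upwards [Lp.coeFn_smul c f] with x hx
          simp only [Pi.smul_apply', hx, Pi.smul_apply, smul_comm c]
        show MemLp.toLp (φ • (⇑(c • f) : T2π → ℂ)) ((Lp.memLp (c • f)).smul hφ)
            = c • MemLp.toLp (φ • (⇑f : T2π → ℂ)) ((Lp.memLp f).smul hφ)
        rw [MemLp.toLp_congr ((Lp.memLp (c • f)).smul hφ)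
          (((Lp.memLp f).smul hφ).const_smul c) h1, MemLp.toLp_const_smul] }
    (eLpNorm φ ⊤ μ).toReal
    (fun f => by
      simp only [LinearMap.coe_mk, AddHom.coe_mk]
      rw [Lp.norm_toLp, Lp.norm_def, ← ENNReal.toReal_mul]
      exact ENNReal.toReal_mono (ENNReal.mul_ne_top hφ.eLpNorm_ne_top (Lp.eLpNorm_ne_top f))
        (eLpNorm_smul_le_eLpNorm_top_mul_eLpNorm 2 (Lp.aestronglyMeasurable f) φ))

/-- The Hardy space `H²`, as the subspace of `L²` of functions whose Fourier coefficients of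
negative index all vanish. -/
def H2 : Submodule ℂ Ltwo where
  carrier := {f : Ltwo | ∀ n : ℤ, n < 0 → fourierCoeff (⇑f) n = 0}
  add_mem' := by
    intro f g hf hg n hn
    have hf' := hf n hn
    have hg' := hg n hn
    rw [← fourierBasis_repr] at hf' hg' ⊢
    rw [map_add, lp.coeFn_add, Pi.add_apply, hf', hg', add_zero]
  zero_mem' := by
    intro n hn
    rw [← fourierBasis_repr, map_zero]
    simp
  smul_mem' := by
    intro c f hf n hn
    have hf' := hf n hn
    rw [← fourierBasis_repr] at hf' ⊢
    rw [_root_.map_smul, lp.coeFn_smul, Pi.smul_apply, hf', smul_zero]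

lemma isClosed_H2 : IsClosed (H2 : Set Ltwo) := by
  have h : (H2 : Set Ltwo) =
      ⋂ (n : ℤ) (_ : n < 0), {f : Ltwo | (fourierBasis.repr f : ℤ → ℂ) n = 0} := by
    ext f
    simp only [Set.mem_iInter, Set.mem_setOf_eq]
    constructor
    · intro hf n hn; rw [fourierBasis_repr]; exact hf n hn
    · intro hf n hn; rw [← fourierBasis_repr]; exact hf n hn
  rw [h]
  refine isClosed_iInter fun n => isClosed_iInter fun _ => ?_
  have h1 : Continuous fun x : lp (fun _ : ℤ => ℂ) 2 => (x : ℤ → ℂ) n :=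
    (continuous_apply n).comp lp.uniformContinuous_coe.continuous
  exact isClosed_eq (h1.comp fourierBasis.repr.continuous) continuous_const
/-- An inner function: a nonconstant bounded function in `H²` which is unimodular a.e. -/
structure IsInner (u : T2π → ℂ) : Prop where
  meas : AEStronglyMeasurable u μ
  unimodular : ∀ᵐ θ ∂μ, ‖u θ‖ = 1
  negCoeff : ∀ n : ℤ, n < 0 → fourierCoeff u n = 0
  nonconst : ¬ ∃ c : ℂ, u =ᵐ[μ] fun _ => c

lemma IsInner.memLinfty {u : T2π → ℂ} (hu : IsInner u) : MemLp u ⊤ μ :=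
  memLp_top_of_bound hu.meas 1 (hu.unimodular.mono fun θ h => by
    rw [h])

/-- The holomorphic extension of a function on the circle to the open unit disk, via the
power series whose coefficients are the Fourier coefficients of nonnegative index. -/
def extD (u : T2π → ℂ) (z : ℂ) : ℂ := ∑' n : ℕ, fourierCoeff u (n : ℤ) * z ^ n

/-- The spectrum `σ(u)` of an inner function `u`: the set of `λ` in the closed unit disk where
`liminf_{z → λ, z ∈ 𝔻} |u(z)| = 0`. -/
def specU (u : T2π → ℂ) : Set ℂ :=
  {l | l ∈ Metric.closedBall (0 : ℂ) 1 ∧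
    Filter.liminf (fun z => ‖extD u z‖) (nhdsWithin l (Metric.ball (0 : ℂ) 1)) = 0}

/-- `σ(u) ∩ 𝕋`, viewed as a subset of the additive circle. -/
def specT (u : T2π → ℂ) : Set T2π := {θ : T2π | zfun θ ∈ specU u}

/-- The model space `K_u = H² ⊖ uH²`. -/
def KuSub (u : T2π → ℂ) (hu : IsInner u) : Submodule ℂ Ltwo :=
  H2 ⊓ (Submodule.map (mulCLM u hu.memLinfty).toLinearMap H2)ᗮ

lemma isClosed_KuSub (u : T2π → ℂ) (hu : IsInner u) : IsClosed ((KuSub u hu : Set Ltwo)) := by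
  have h : (KuSub u hu : Set Ltwo) = (H2 : Set Ltwo) ∩
      ((Submodule.map (mulCLM u hu.memLinfty).toLinearMap H2)ᗮ : Set Ltwo) := rfl
  rw [h]
  exact isClosed_H2.inter (Submodule.isClosed_orthogonal _)

instance (u : T2π → ℂ) (hu : IsInner u) : CompleteSpace (KuSub u hu) :=
  (isClosed_KuSub u hu).completeSpace_coe

attribute [irreducible] H2 KuSub mulCLM

instance KuNormedAddCommGroup (u : T2π → ℂ) (hu : IsInner u) :
    NormedAddCommGroup (KuSub u hu) := Submodule.normedAddCommGroup _

instance KuInnerProductSpace (u : T2π → ℂ) (hu : IsInner u) :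
    InnerProductSpace ℂ (KuSub u hu) := Submodule.innerProductSpace _

instance KuNormedSpace (u : T2π → ℂ) (hu : IsInner u) :
    NormedSpace ℂ (KuSub u hu) := by infer_instance

instance KuContinuousStar (u : T2π → ℂ) (hu : IsInner u) :
    ContinuousStar (KuSub u hu →L[ℂ] KuSub u hu) :=
  ⟨(ContinuousLinearMap.adjoint (𝕜 := ℂ) (E := KuSub u hu) (F := KuSub u hu)).continuous⟩

/-- The truncated Toeplitz operator `A_φ^u = P_u M_φ |_{K_u}` on the model space `K_u`. -/
def TTOp (u : T2π → ℂ) (hu : IsInner u) (φ : T2π → ℂ) (hφ : MemLp φ ⊤ μ) :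
    KuSub u hu →L[ℂ] KuSub u hu :=
  ((KuSub u hu).orthogonalProjectionOnto) ∘L (mulCLM φ hφ) ∘L (KuSub u hu).subtypeL

/-- The compressed shift `A_z^u`. -/
def Az (u : T2π → ℂ) (hu : IsInner u) : KuSub u hu →L[ℂ] KuSub u hu :=
  TTOp u hu zfun memLinfty_zfun

/-- The unital C*-algebra generated by the compressed shift. -/
def CstarAz (u : T2π → ℂ) (hu : IsInner u) :
    StarSubalgebra ℂ (KuSub u hu →L[ℂ] KuSub u hu) :=
  StarAlgebra.elemental ℂ (Az u hu)

/-- The commutator ideal of a C*-algebra of operators, i.e. the smallest closed two-sided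
ideal containing all commutators: the closure of the two-sided ideal generated by the
commutators.  Realized here as a subset of the ambient algebra of bounded operators. -/
def commutatorIdealSet {u : T2π → ℂ} {hu : IsInner u}
    (S : StarSubalgebra ℂ (KuSub u hu →L[ℂ] KuSub u hu)) :
    Set (KuSub u hu →L[ℂ] KuSub u hu) :=
  Subtype.val '' (closure
    ((TwoSidedIdeal.span {x : S | ∃ a b : S, x = a * b - b * a} : TwoSidedIdeal S) : Set S))

/-- The essential spectrum of an operator on `K_u`: the spectrum of its image in the Calkin
algebra, i.e. the set of `z` such that `z - T` is not invertible modulo the compacts. -/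
def essSpectrum {u : T2π → ℂ} {hu : IsInner u} (T : KuSub u hu →L[ℂ] KuSub u hu) : Set ℂ :=
  {z : ℂ | ¬ ∃ S : KuSub u hu →L[ℂ] KuSub u hu,
    IsCompactOperator (⇑(S * (z • (1 : KuSub u hu →L[ℂ] KuSub u hu) - T) - 1)) ∧
    IsCompactOperator (⇑((z • (1 : KuSub u hu →L[ℂ] KuSub u hu) - T) * S - 1))}

/-- The essential norm of an operator on `K_u`: the norm of its image in the Calkin algebra,
i.e. the distance to the ideal of compact operators. -/
def essNorm {u : T2π → ℂ} {hu : IsInner u} (T : KuSub u hu →L[ℂ] KuSub u hu) : ℝ :=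
  sInf {c : ℝ | ∃ K : KuSub u hu →L[ℂ] KuSub u hu, IsCompactOperator (⇑K) ∧ c = ‖T - K‖}


/-! ### Piecewise continuous symbols -/

/-- `φ` has one-sided limits `Lp` (from above) and `Lm` (from below) at the point `ζ` of the
circle, computed in terms of any lift of `ζ` to `ℝ`. -/
def HasOneSidedLimits (φ : T2π → ℂ) (ζ : T2π) (Lp Lm : ℂ) : Prop :=
  ∀ x : ℝ, (x : T2π) = ζ →
    Filter.Tendsto (fun t : ℝ => φ (t : T2π)) (nhdsWithin x (Set.Ioi x)) (nhds Lp) ∧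
    Filter.Tendsto (fun t : ℝ => φ (t : T2π)) (nhdsWithin x (Set.Iio x)) (nhds Lm)

/-- A piecewise continuous function on the circle: continuous off a finite set, with one-sided
limits at each of the exceptional points. -/
def PiecewiseContinuous (φ : T2π → ℂ) : Prop :=
  ∃ F : Finset T2π, ContinuousOn φ ((↑F : Set T2π)ᶜ) ∧
    ∀ ζ ∈ F, ∃ Lp Lm : ℂ, HasOneSidedLimits φ ζ Lp Lm

/-- The function `χ(e^{iθ}) = 1 - θ/(2π)`, `0 ≤ θ < 2π`. -/
def chiFun : T2π → ℂ :=
  fun ζ => 1 - ((((AddCircle.measurableEquivIco (T := 2 * Real.pi) 0 ζ : ℝ) / (2 * Real.pi)) : ℝ) : ℂ)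

lemma memLinfty_chiFun : MemLp chiFun ⊤ μ := by
  have hmeas : Measurable chiFun := by
    have h1 : Measurable fun ζ : T2π => (AddCircle.measurableEquivIco (T := 2 * Real.pi) 0 ζ : ℝ) :=
      measurable_subtype_coe.comp (AddCircle.measurableEquivIco (T := 2 * Real.pi) 0).measurable
    exact (Complex.measurable_ofReal.comp (h1.div_const _)).const_sub 1
  refine memLp_top_of_bound hmeas.aestronglyMeasurable 1 (Filter.Eventually.of_forall fun ζ => ?_)
  set r : ℝ := (AddCircle.measurableEquivIco (T := 2 * Real.pi) 0 ζ : ℝ) with hr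
  have hmem : r ∈ Set.Ico (0 : ℝ) (0 + 2 * Real.pi) :=
    (AddCircle.measurableEquivIco (T := 2 * Real.pi) 0 ζ).2
  have h2π : (0 : ℝ) < 2 * Real.pi := fact2pi.out
  have h0 : 0 ≤ r / (2 * Real.pi) := div_nonneg hmem.1 h2π.le
  have h1' : r / (2 * Real.pi) < 1 := by
    rw [div_lt_one h2π]
    simpa using hmem.2
  have : chiFun ζ = (((1 : ℝ) - r / (2 * Real.pi) : ℝ) : ℂ) := by
    simp [chiFun, hr]
  rw [this, Complex.norm_real, Real.norm_eq_abs, abs_le]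
  constructor <;> nlinarith

/-! ### Ingredients for Clark's unitary perturbations -/

/-- The value `u(0)` of the holomorphic extension of `u` at the origin. -/
def u0 (u : T2π → ℂ) : ℂ := extD u 0

/-- The reproducing kernel `k₀ = 1 - conj(u(0))·u` at the origin, as a function. -/
def k0fun (u : T2π → ℂ) : T2π → ℂ := fun θ => 1 - (starRingEnd ℂ) (u0 u) * u θ

lemma memLinfty_k0fun {u : T2π → ℂ} (hu : IsInner u) : MemLp (k0fun u) ⊤ μ := by
  have hmeas : AEStronglyMeasurable (k0fun u) μ :=
    aestronglyMeasurable_const.sub (hu.meas.const_mul _)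
  refine memLp_top_of_bound hmeas (1 + ‖u0 u‖) ?_
  filter_upwards [hu.unimodular] with θ hθ
  calc ‖1 - (starRingEnd ℂ) (u0 u) * u θ‖
      ≤ ‖(1 : ℂ)‖ + ‖(starRingEnd ℂ) (u0 u) * u θ‖ := norm_sub_le _ _
    _ ≤ 1 + ‖u0 u‖ := by
        rw [norm_mul]
        simp only [norm_one, map_mul]
        rw [Complex.norm_conj, hθ, mul_one]

/-- `Cf(ζ) = u(ζ) ζ̄ conj(f(ζ))`, applied to `k₀`, as a function. -/
def Ck0fun (u : T2π → ℂ) : T2π → ℂ :=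
  fun θ => u θ * (starRingEnd ℂ) (zfun θ) * (starRingEnd ℂ) (k0fun u θ)

lemma memLinfty_Ck0fun {u : T2π → ℂ} (hu : IsInner u) : MemLp (Ck0fun u) ⊤ μ :=
  memLinfty_mul (memLinfty_mul hu.memLinfty (memLinfty_conj memLinfty_zfun))
    (memLinfty_conj (memLinfty_k0fun hu))

/-- `k₀` as an element of the model space (it indeed lies in `K_u`, so that projecting the
corresponding `L²`-function onto `K_u` does not change it). -/
def k0 (u : T2π → ℂ) (hu : IsInner u) : KuSub u hu :=
  (KuSub u hu).orthogonalProjectionOnto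
    (MemLp.toLp (k0fun u) ((memLinfty_k0fun hu).mono_exponent le_top))

/-- `Ck₀` as an element of the model space. -/
def Ck0 (u : T2π → ℂ) (hu : IsInner u) : KuSub u hu :=
  (KuSub u hu).orthogonalProjectionOnto
    (MemLp.toLp (Ck0fun u) ((memLinfty_Ck0fun hu).mono_exponent le_top))

/-- The rank-one operator `k₀ ⊗ Ck₀ : f ↦ ⟨f, Ck₀⟩ k₀` (the inner product being that of `L²`,
conjugate-linear in `Ck₀`). -/
def rankOneClark (u : T2π → ℂ) (hu : IsInner u) : KuSub u hu →L[ℂ] KuSub u hu :=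
  (innerSL ℂ (Ck0 u hu)).smulRight (k0 u hu)

/-- The Clark perturbation `U_α = A_z^u + (α/(1 - conj(u(0))α)) k₀ ⊗ Ck₀`. -/
def clarkU (u : T2π → ℂ) (hu : IsInner u) (α : ℂ) : KuSub u hu →L[ℂ] KuSub u hu :=
  Az u hu + (α / (1 - (starRingEnd ℂ) (u0 u) * α)) • rankOneClark u hu

/-! ### Complex symmetric operators -/

/-- A conjugation: a conjugate-linear isometric involution. -/
structure IsConjugation {E : Type*} [NormedAddCommGroup E] [InnerProductSpace ℂ E]
    (J : E → E) : Prop where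
  map_add : ∀ x y, J (x + y) = J x + J y
  map_smul : ∀ (c : ℂ) (x), J (c • x) = (starRingEnd ℂ) c • J x
  involutive : ∀ x, J (J x) = x
  inner_map : ∀ x y, (inner ℂ (J x) (J y) : ℂ) = (inner ℂ y x : ℂ)

/-- The block operator matrix `[[0, A], [0, 0]]` on `H ⊕ H` (with the `ℓ²` direct sum norm). -/
def blockOp {H : Type*} [NormedAddCommGroup H] [InnerProductSpace ℂ H] (A : H →L[ℂ] H) :
    WithLp 2 (H × H) →L[ℂ] WithLp 2 (H × H) :=
  (((WithLp.prodContinuousLinearEquiv 2 ℂ H H).symm : (H × H) →L[ℂ] WithLp 2 (H × H)) ∘L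
    ((A.comp (ContinuousLinearMap.snd ℂ H H)).prod 0)) ∘L
    ((WithLp.prodContinuousLinearEquiv 2 ℂ H H) : WithLp 2 (H × H) →L[ℂ] (H × H))


/-! ### The unilateral shift and direct sums -/

/-- `ℓ²(ℕ)`. -/
abbrev ellTwo := lp (fun _ : ℕ => ℂ) 2

/-- The underlying function of the unilateral shift: `(x₀, x₁, …) ↦ (0, x₀, x₁, …)`. -/
def shiftFun (x : ℕ → ℂ) : ℕ → ℂ := fun n => if n = 0 then 0 else x (n - 1)

lemma memℓp_shiftFun (x : ellTwo) : Memℓp (shiftFun (⇑x)) 2 := by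
  apply memℓp_gen
  have hs : Summable fun n : ℕ => ‖x n‖ ^ (2 : ℝ≥0∞).toReal :=
    (lp.memℓp x).summable (by norm_num)
  refine (summable_nat_add_iff 1).mp ?_
  have h : (fun n : ℕ => ‖shiftFun (⇑x) (n + 1)‖ ^ (2 : ℝ≥0∞).toReal)
      = fun n : ℕ => ‖x n‖ ^ (2 : ℝ≥0∞).toReal := by
    funext n; simp [shiftFun]
  rw [h]; exact hs

lemma tsum_shiftFun (x : ellTwo) :
    ∑' n : ℕ, ‖(⟨shiftFun (⇑x), memℓp_shiftFun x⟩ : ellTwo) n‖ ^ (2 : ℝ≥0∞).toReal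
      = ∑' n : ℕ, ‖x n‖ ^ (2 : ℝ≥0∞).toReal := by
  show ∑' n : ℕ, ‖shiftFun (⇑x) n‖ ^ (2 : ℝ≥0∞).toReal = _
  rw [Summable.tsum_eq_zero_add ((memℓp_shiftFun x).summable (by norm_num))]
  have h0 : ‖shiftFun (⇑x) 0‖ ^ (2 : ℝ≥0∞).toReal = 0 := by
    simp [shiftFun, Real.zero_rpow (by norm_num : (2 : ℝ≥0∞).toReal ≠ 0)]
  have h : (fun n : ℕ => ‖shiftFun (⇑x) (n + 1)‖ ^ (2 : ℝ≥0∞).toReal)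
      = fun n : ℕ => ‖x n‖ ^ (2 : ℝ≥0∞).toReal := by
    funext n; simp [shiftFun]
  rw [h0, h, zero_add]

/-- The unilateral shift `S` on `ℓ²(ℕ)`. -/
def shiftS : ellTwo →L[ℂ] ellTwo :=
  LinearMap.mkContinuous
    { toFun := fun x => (⟨shiftFun (⇑x), memℓp_shiftFun x⟩ : ellTwo)
      map_add' := fun x y => by
        apply Subtype.ext
        funext n
        have h1 : (x + y : ellTwo) n = x n + y n := by rw [lp.coeFn_add]; rfl
        show shiftFun (⇑(x + y)) n = shiftFun (⇑x) n + shiftFun (⇑y) n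
        by_cases h : n = 0 <;> simp [shiftFun, h, h1]
      map_smul' := fun c x => by
        apply Subtype.ext
        funext n
        have h1 : (c • x : ellTwo) n = c • x n := by rw [lp.coeFn_smul]; rfl
        show shiftFun (⇑(c • x)) n = c • shiftFun (⇑x) n
        by_cases h : n = 0 <;> simp [shiftFun, h, h1] }
    1
    (fun x => by
      have h2 : (0 : ℝ) < (2 : ℝ≥0∞).toReal := by norm_num
      show ‖(⟨shiftFun (⇑x), memℓp_shiftFun x⟩ : ellTwo)‖ ≤ 1 * ‖x‖
      rw [one_mul, lp.norm_eq_tsum_rpow h2, lp.norm_eq_tsum_rpow h2, tsum_shiftFun x])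

/-- The diagonal (componentwise) operator `⊕ᵢ Vᵢ` on an `ℓ²`-direct sum, given a uniform
bound on the `Vᵢ`. -/
def lpDiag {E : ℕ → Type*} [∀ i, NormedAddCommGroup (E i)] [∀ i, NormedSpace ℂ (E i)]
    (V : ∀ i, E i →L[ℂ] E i) (C : ℝ) (hC : 0 ≤ C) (hV : ∀ i (y : E i), ‖V i y‖ ≤ C * ‖y‖) :
    lp E 2 →L[ℂ] lp E 2 :=
  have h2 : (0 : ℝ) < (2 : ℝ≥0∞).toReal := by norm_num
  have key : ∀ x : lp E 2, Summable fun i => ‖V i (x i)‖ ^ (2 : ℝ≥0∞).toReal := by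
    intro x
    refine Summable.of_nonneg_of_le (fun i => Real.rpow_nonneg (norm_nonneg _) _)
      (fun i => ?_) (((lp.memℓp x).summable h2).mul_left (C ^ (2 : ℝ≥0∞).toReal))
    calc ‖V i (x i)‖ ^ (2 : ℝ≥0∞).toReal
        ≤ (C * ‖x i‖) ^ (2 : ℝ≥0∞).toReal :=
          Real.rpow_le_rpow (norm_nonneg _) (hV i (x i)) h2.le
      _ = C ^ (2 : ℝ≥0∞).toReal * ‖x i‖ ^ (2 : ℝ≥0∞).toReal :=
          Real.mul_rpow hC (norm_nonneg _)
  LinearMap.mkContinuous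
    { toFun := fun x => (⟨fun i => V i (x i), memℓp_gen (key x)⟩ : lp E 2)
      map_add' := fun x y => by
        apply Subtype.ext
        funext i
        have h1 : (x + y : lp E 2) i = x i + y i := by rw [lp.coeFn_add]; rfl
        show V i ((x + y : lp E 2) i) = V i (x i) + V i (y i)
        rw [h1, map_add]
      map_smul' := fun c x => by
        apply Subtype.ext
        funext i
        have h1 : (c • x : lp E 2) i = c • x i := by rw [lp.coeFn_smul]; rfl
        show V i ((c • x : lp E 2) i) = c • V i (x i)
        rw [h1, _root_.map_smul] }
    C
    (fun x => by
      show ‖(⟨fun i => V i (x i), memℓp_gen (key x)⟩ : lp E 2)‖ ≤ C * ‖x‖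
      rw [lp.norm_eq_tsum_rpow h2, lp.norm_eq_tsum_rpow h2]
      have hsum := (lp.memℓp x).summable h2
      have hineq : ∑' i, ‖(⟨fun i => V i (x i), memℓp_gen (key x)⟩ : lp E 2) i‖
            ^ (2 : ℝ≥0∞).toReal
          ≤ C ^ (2 : ℝ≥0∞).toReal * ∑' i, ‖x i‖ ^ (2 : ℝ≥0∞).toReal := by
        rw [← tsum_mul_left]
        refine Summable.tsum_le_tsum (fun i => ?_) (key x) (hsum.mul_left _)
        calc ‖V i (x i)‖ ^ (2 : ℝ≥0∞).toReal
            ≤ (C * ‖x i‖) ^ (2 : ℝ≥0∞).toReal :=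
              Real.rpow_le_rpow (norm_nonneg _) (hV i (x i)) h2.le
          _ = C ^ (2 : ℝ≥0∞).toReal * ‖x i‖ ^ (2 : ℝ≥0∞).toReal :=
              Real.mul_rpow hC (norm_nonneg _)
      calc (∑' i, ‖(⟨fun i => V i (x i), memℓp_gen (key x)⟩ : lp E 2) i‖
            ^ (2 : ℝ≥0∞).toReal) ^ (1 / (2 : ℝ≥0∞).toReal)
          ≤ (C ^ (2 : ℝ≥0∞).toReal * ∑' i, ‖x i‖ ^ (2 : ℝ≥0∞).toReal)
              ^ (1 / (2 : ℝ≥0∞).toReal) := by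
            refine Real.rpow_le_rpow ?_ hineq (by positivity)
            exact tsum_nonneg fun i => Real.rpow_nonneg (norm_nonneg _) _
        _ = C * (∑' i, ‖x i‖ ^ (2 : ℝ≥0∞).toReal) ^ (1 / (2 : ℝ≥0∞).toReal) := by
            rw [Real.mul_rpow (Real.rpow_nonneg hC _)
              (tsum_nonneg fun i => Real.rpow_nonneg (norm_nonneg _) _)]
            rw [← Real.rpow_mul hC, mul_one_div_cancel (ne_of_gt h2), Real.rpow_one])


/-- The Hankel-type operator `H_f^u : K_u → L²`, `g ↦ (I - P_u)(f·g)`. -/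
def hankel (u : T2π → ℂ) (hu : IsInner u) (f : T2π → ℂ) (hf : MemLp f ⊤ μ) :
    KuSub u hu →L[ℂ] Ltwo :=
  ((ContinuousLinearMap.id ℂ Ltwo - (KuSub u hu).subtypeL ∘L (KuSub u hu).orthogonalProjectionOnto) ∘L
    mulCLM f hf) ∘L (KuSub u hu).subtypeL

/-- `S ⊕ S*` on `ℓ² ⊕ ℓ²`. -/
def sOplusSstar : WithLp 2 (ellTwo × ellTwo) →L[ℂ] WithLp 2 (ellTwo × ellTwo) :=
  (((WithLp.prodContinuousLinearEquiv 2 ℂ ellTwo ellTwo).symm :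
      (ellTwo × ellTwo) →L[ℂ] WithLp 2 (ellTwo × ellTwo)) ∘L
    (shiftS.prodMap (ContinuousLinearMap.adjoint shiftS))) ∘L
    ((WithLp.prodContinuousLinearEquiv 2 ℂ ellTwo ellTwo) :
      WithLp 2 (ellTwo × ellTwo) →L[ℂ] (ellTwo × ellTwo))

/-- `⊕_{i=1}^∞ (S ⊕ S*)` on the `ℓ²`-direct sum of countably many copies of `ℓ² ⊕ ℓ²`. -/
def bigDirectSum :
    lp (fun _ : ℕ => WithLp 2 (ellTwo × ellTwo)) 2 →L[ℂ]
      lp (fun _ : ℕ => WithLp 2 (ellTwo × ellTwo)) 2 :=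
  lpDiag (fun _ => sOplusSstar) ‖sOplusSstar‖ (norm_nonneg _)
    (fun _ y => ContinuousLinearMap.le_opNorm _ y)


/-! ### Basic lemmas about `mulCLM` and Fourier coefficients -/

lemma mulCLM_coeFn {φ : T2π → ℂ} (hφ : MemLp φ ⊤ μ) (f : Ltwo) :
    ⇑(mulCLM φ hφ f) =ᵐ[μ] fun θ => φ θ * f θ := by
  unfold mulCLM
  exact MemLp.coeFn_toLp ((Lp.memLp f).smul hφ)

lemma mulCLM_congr {φ ψ : T2π → ℂ} (hφ : MemLp φ ⊤ μ) (hψ : MemLp ψ ⊤ μ) (h : φ = ψ) :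
    mulCLM φ hφ = mulCLM ψ hψ := by subst h; rfl

lemma mem_H2_iff {f : Ltwo} : f ∈ H2 ↔ ∀ n : ℤ, n < 0 → fourierCoeff (⇑f) n = 0 := by
  unfold H2; exact Iff.rfl

lemma fourierCoeff_congr_ae {f g : T2π → ℂ} (h : f =ᵐ[μ] g) (n : ℤ) :
    fourierCoeff f n = fourierCoeff g n := by
  unfold fourierCoeff
  exact integral_congr_ae (by filter_upwards [h] with t ht; rw [ht])

lemma fourierCoeff_shift (f : T2π → ℂ) (m n : ℤ) :
    fourierCoeff (fun θ => fourier m θ * f θ) n = fourierCoeff f (n - m) := by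
  unfold fourierCoeff
  congr 1
  funext t
  simp only [smul_eq_mul, ← mul_assoc, ← fourier_add]
  congr 2
  ring

/-- `⟪e_n, f⟫ = f̂(n)`. -/
lemma inner_fourierLp (n : ℤ) (f : Ltwo) :
    (inner ℂ (fourierLp 2 n : Ltwo) f : ℂ) = fourierCoeff (⇑f) n := by
  rw [← fourierBasis_repr]
  rw [show (fourierLp (T := 2 * Real.pi) 2 n : Ltwo) = fourierBasis n by rw [coe_fourierBasis]]
  rw [fourierBasis.repr_apply_apply]

lemma fourierCoeff_fourierLp (m n : ℤ) :
    fourierCoeff (⇑(fourierLp 2 m : Ltwo)) n = if n = m then (1 : ℂ) else 0 := by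
  rw [← inner_fourierLp]
  have := orthonormal_iff_ite.mp (orthonormal_fourier (T := 2 * Real.pi)) n m
  simpa using this

lemma fourierCoeff_sub (f g : Ltwo) (n : ℤ) :
    fourierCoeff (⇑(f - g)) n = fourierCoeff (⇑f) n - fourierCoeff (⇑g) n := by
  rw [← inner_fourierLp, ← inner_fourierLp, ← inner_fourierLp, inner_sub_right]

lemma fourierCoeff_smul (c : ℂ) (f : Ltwo) (n : ℤ) :
    fourierCoeff (⇑(c • f)) n = c * fourierCoeff (⇑f) n := by
  rw [← inner_fourierLp, ← inner_fourierLp, inner_smul_right]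

lemma mem_H2_fourierLp {n : ℤ} (hn : 0 ≤ n) : (fourierLp 2 n : Ltwo) ∈ H2 := by
  rw [mem_H2_iff]
  intro m hm
  rw [fourierCoeff_fourierLp]
  rw [if_neg (by omega)]

/-- Fourier coefficients of `mulCLM φ f` shift when `φ = fourier m`. -/
lemma fourierCoeff_mulCLM_fourier (m : ℤ) (f : Ltwo) (n : ℤ) :
    fourierCoeff (⇑(mulCLM ⇑(fourier m) (memLinfty_contMap (fourier m)) f)) n
      = fourierCoeff (⇑f) (n - m) := by
  rw [fourierCoeff_congr_ae (mulCLM_coeFn _ f) n, fourierCoeff_shift]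

lemma inner_def' (f g : Ltwo) : (inner ℂ f g : ℂ) = ∫ t, conj (f t) * g t ∂μ := by
  rw [MeasureTheory.L2.inner_def]
  simp [RCLike.inner_apply, mul_comm]

/-- Adjoint relation for multiplication operators. -/
lemma inner_mulCLM_right {φ : T2π → ℂ} (hφ : MemLp φ ⊤ μ) (f g : Ltwo) :
    (inner ℂ f (mulCLM φ hφ g) : ℂ)
      = inner ℂ (mulCLM (fun θ => conj (φ θ)) (memLinfty_conj hφ) f) g := by
  rw [inner_def', inner_def']
  apply integral_congr_ae
  filter_upwards [mulCLM_coeFn hφ g, mulCLM_coeFn (memLinfty_conj hφ) f] with t h1 h2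
  rw [h1, h2]
  simp only [map_mul, RingHomCompTriple.comp_apply, RingHom.id_apply, Complex.conj_conj]
  ring

lemma mulCLM_comp {φ ψ : T2π → ℂ} (hφ : MemLp φ ⊤ μ) (hψ : MemLp ψ ⊤ μ) :
    mulCLM φ hφ ∘L mulCLM ψ hψ = mulCLM (fun θ => φ θ * ψ θ) (memLinfty_mul hφ hψ) := by
  ext f
  filter_upwards [mulCLM_coeFn hφ (mulCLM ψ hψ f), mulCLM_coeFn hψ f,
    mulCLM_coeFn (memLinfty_mul hφ hψ) f] with t h1 h2 h3
  simp only [ContinuousLinearMap.coe_comp', Function.comp_apply]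
  rw [h1, h2, h3, mul_assoc]

lemma mulCLM_add {φ ψ : T2π → ℂ} (hφ : MemLp φ ⊤ μ) (hψ : MemLp ψ ⊤ μ) :
    mulCLM (fun θ => φ θ + ψ θ) (hφ.add hψ) = mulCLM φ hφ + mulCLM ψ hψ := by
  rw [mulCLM_congr (φ := fun θ => φ θ + ψ θ) (ψ := φ + ψ) (hφ.add hψ) (hφ.add hψ) rfl]
  ext f
  filter_upwards [mulCLM_coeFn (hφ.add hψ) f, mulCLM_coeFn hφ f, mulCLM_coeFn hψ f,
    Lp.coeFn_add (mulCLM φ hφ f) (mulCLM ψ hψ f)] with t h1 h2 h3 h4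
  simp only [ContinuousLinearMap.add_apply] at h4 ⊢
  rw [h1, h4, Pi.add_apply, Pi.add_apply, h2, h3, add_mul]

lemma mulCLM_smul (c : ℂ) {φ : T2π → ℂ} (hφ : MemLp φ ⊤ μ) :
    mulCLM (fun θ => c * φ θ) (by simpa using hφ.const_mul c) = c • mulCLM φ hφ := by
  ext f
  filter_upwards [mulCLM_coeFn (by simpa using hφ.const_mul c : MemLp (fun θ => c * φ θ) ⊤ μ) f,
    mulCLM_coeFn hφ f, Lp.coeFn_smul c (mulCLM φ hφ f)] with t h1 h2 h3
  simp only [ContinuousLinearMap.smul_apply] at h3 ⊢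
  rw [h1, h3, Pi.smul_apply, h2, smul_eq_mul, mul_assoc]

lemma mulCLM_norm_le {φ : T2π → ℂ} (hφ : MemLp φ ⊤ μ) :
    ‖mulCLM φ hφ‖ ≤ (eLpNorm φ ⊤ μ).toReal := by
  unfold mulCLM
  exact LinearMap.mkContinuous_norm_le _ ENNReal.toReal_nonneg _

/-! ### The model space and multiplication by `u` -/

section InnerU

variable {u : T2π → ℂ} (hu : IsInner u)

lemma mem_KuSub_iff {g : Ltwo} :
    g ∈ KuSub u hu ↔ g ∈ H2 ∧
      ∀ h : Ltwo, h ∈ H2 → (inner ℂ (mulCLM u hu.memLinfty h) g : ℂ) = 0 := by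
  unfold KuSub
  rw [Submodule.mem_inf, Submodule.mem_orthogonal]
  constructor
  · rintro ⟨h1, h2⟩
    exact ⟨h1, fun h hh => h2 _ ⟨h, hh, rfl⟩⟩
  · rintro ⟨h1, h2⟩
    refine ⟨h1, ?_⟩
    rintro x ⟨h, hh, rfl⟩
    exact h2 h hh

/-- Multiplication by the inner function `u` maps `H²` into `H²`. -/
lemma mulCLM_inner_mem_H2 {h : Ltwo} (hh : h ∈ H2) :
    mulCLM u hu.memLinfty h ∈ H2 := by
  rw [mem_H2_iff]
  intro m hm
  rw [← inner_fourierLp]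
  have hsum : HasSum (fun n : ℤ => fourierCoeff (⇑h) n • fourierLp 2 n) h :=
    hasSum_fourier_series_L2 h
  have hsum2 : HasSum
      (fun n : ℤ => (innerSL ℂ (fourierLp 2 m : Ltwo))
        ((mulCLM u hu.memLinfty) (fourierCoeff (⇑h) n • fourierLp 2 n)))
      ((innerSL ℂ (fourierLp 2 m : Ltwo)) ((mulCLM u hu.memLinfty) h)) :=
    ((innerSL ℂ (fourierLp 2 m : Ltwo)).hasSum ((mulCLM u hu.memLinfty).hasSum hsum))
  have hzero : (fun n : ℤ => (innerSL ℂ (fourierLp 2 m : Ltwo))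
      ((mulCLM u hu.memLinfty) (fourierCoeff (⇑h) n • fourierLp 2 n))) = fun _ => (0 : ℂ) := by
    funext n
    rcases lt_or_ge n 0 with hn | hn
    · rw [_root_.map_smul, _root_.map_smul, (mem_H2_iff.mp hh) n hn, zero_smul]
    · rw [_root_.map_smul, _root_.map_smul, smul_eq_mul]
      have : (innerSL ℂ (fourierLp 2 m : Ltwo)) ((mulCLM u hu.memLinfty) (fourierLp 2 n)) = 0 := by
        show (inner ℂ (fourierLp 2 m : Ltwo) ((mulCLM u hu.memLinfty) (fourierLp 2 n)) : ℂ) = 0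
        rw [inner_fourierLp]
        have hae : ⇑((mulCLM u hu.memLinfty) (fourierLp 2 n))
            =ᵐ[μ] fun θ => fourier n θ * u θ := by
          filter_upwards [mulCLM_coeFn hu.memLinfty (fourierLp 2 n), coeFn_fourierLp 2 n]
            with t h1 h2
          rw [h1, h2, mul_comm]
        rw [fourierCoeff_congr_ae hae, fourierCoeff_shift]
        exact hu.negCoeff _ (by omega)
      rw [this, mul_zero]
  rw [hzero] at hsum2
  have := hsum2.unique hasSum_zero
  simpa using this

/-- `u`, as an element of `L²`, realised as `u·e₀`. -/
def uL2 : Ltwo := mulCLM u hu.memLinfty (fourierLp 2 0)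

lemma uL2_coeFn : ⇑(uL2 hu) =ᵐ[μ] u := by
  filter_upwards [mulCLM_coeFn hu.memLinfty (fourierLp 2 0), coeFn_fourierLp 2 0]
    with t h1 h2
  rw [show uL2 hu = mulCLM u hu.memLinfty (fourierLp 2 0) from rfl] at *
  rw [h1, h2, fourier_zero, mul_one]

lemma inner_mulCLM_u (f g : Ltwo) :
    (inner ℂ (mulCLM u hu.memLinfty f) (mulCLM u hu.memLinfty g) : ℂ) = inner ℂ f g := by
  rw [inner_def', inner_def']
  apply integral_congr_ae
  filter_upwards [mulCLM_coeFn hu.memLinfty f, mulCLM_coeFn hu.memLinfty g, hu.unimodular]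
    with t h1 h2 h3
  rw [h1, h2]
  have : conj (u t) * u t = 1 := by
    rw [mul_comm, Complex.mul_conj, Complex.normSq_eq_norm_sq, h3]
    norm_num
  calc conj (u t * f t) * (u t * g t) = (conj (u t) * u t) * (conj (f t) * g t) := by
        rw [map_mul]; ring
    _ = conj (f t) * g t := by rw [this, one_mul]

end InnerU
section Claims

variable {u : T2π → ℂ} (hu : IsInner u)

lemma mulCLM_fourier_mem_H2 {h : Ltwo} (hh : h ∈ H2) {k : ℤ} (hk : 0 ≤ k) :
    mulCLM ⇑(fourier k) (memLinfty_contMap (fourier k)) h ∈ H2 := by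
  rw [mem_H2_iff]
  intro n hn
  rw [fourierCoeff_mulCLM_fourier]
  exact mem_H2_iff.mp hh _ (by omega)

lemma hankel_apply (f : T2π → ℂ) (hf : MemLp f ⊤ μ) (g : KuSub u hu) :
    hankel u hu f hf g = mulCLM f hf (g : Ltwo)
      - ↑((KuSub u hu).orthogonalProjectionOnto (mulCLM f hf (g : Ltwo))) := by
  unfold hankel
  simp [ContinuousLinearMap.comp_apply, ContinuousLinearMap.sub_apply,
    Submodule.subtypeL_apply]

lemma inner_fourierLp_neg_one_eq_zero {x : Ltwo} (hx : x ∈ H2) :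
    (inner ℂ x (fourierLp 2 (-1) : Ltwo) : ℂ) = 0 := by
  rw [← inner_conj_symm, inner_fourierLp, mem_H2_iff.mp hx (-1) (by norm_num), map_zero]

/-- Claim A: the Hankel operator with symbol `z̄` is rank one. -/
lemma hankel_fourier_neg_one_apply (g : KuSub u hu) :
    hankel u hu ⇑(fourier (-1)) (memLinfty_contMap (fourier (-1))) g
      = fourierCoeff (⇑(g : Ltwo)) 0 • (fourierLp 2 (-1) : Ltwo) := by
  obtain ⟨hgH2, hgOrth⟩ := (mem_KuSub_iff hu).mp g.2
  set m : Ltwo := mulCLM ⇑(fourier (-1)) (memLinfty_contMap (fourier (-1))) ((g : Ltwo)) with hm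
  set c : ℂ := fourierCoeff (⇑(g : Ltwo)) 0 with hc
  set v : Ltwo := m - c • (fourierLp 2 (-1) : Ltwo) with hv
  have hvH2 : v ∈ H2 := by
    rw [mem_H2_iff]
    intro n hn
    rw [hv, fourierCoeff_sub, fourierCoeff_smul, fourierCoeff_fourierLp, hm,
      fourierCoeff_mulCLM_fourier]
    rcases eq_or_ne n (-1) with h | h
    · subst h; norm_num [← hc]
    · rw [if_neg h, mul_zero, mem_H2_iff.mp hgH2 (n - (-1)) (by omega), sub_zero]
  have hvK : v ∈ KuSub u hu := by
    rw [mem_KuSub_iff hu]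
    refine ⟨hvH2, fun h hh => ?_⟩
    rw [hv, inner_sub_right, inner_smul_right]
    have h1 : (inner ℂ (mulCLM u hu.memLinfty h) (fourierLp 2 (-1) : Ltwo) : ℂ) = 0 :=
      inner_fourierLp_neg_one_eq_zero (mulCLM_inner_mem_H2 hu hh)
    have h2 : (inner ℂ (mulCLM u hu.memLinfty h) m : ℂ) = 0 := by
      rw [hm, inner_mulCLM_right]
      have hsym : (fun θ => conj (fourier (-1) θ)) = ⇑(fourier (T := 2 * Real.pi) 1) := by
        funext θ
        rw [show ((-1 : ℤ)) = -(1 : ℤ) by norm_num, fourier_neg, Complex.conj_conj]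
      rw [mulCLM_congr _ (memLinfty_contMap (fourier 1)) hsym]
      have hcomm : mulCLM ⇑(fourier 1) (memLinfty_contMap (fourier 1))
            ((mulCLM u hu.memLinfty) h)
          = (mulCLM u hu.memLinfty) (mulCLM ⇑(fourier 1) (memLinfty_contMap (fourier 1)) h) := by
        have e1 := mulCLM_comp (memLinfty_contMap (fourier 1)) hu.memLinfty
        have e2 := mulCLM_comp hu.memLinfty (memLinfty_contMap (fourier 1))
        have e3 : (fun θ => fourier 1 θ * u θ) = fun θ => u θ * fourier 1 θ := by
          funext θ; ring
        have := e1.trans ((mulCLM_congr _ _ e3).trans e2.symm)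
        exact DFunLike.congr_fun this h
      rw [hcomm]
      exact hgOrth _ (mulCLM_fourier_mem_H2 hh (by norm_num))
    rw [h1, h2, mul_zero, sub_zero]
  have hproj : (↑((KuSub u hu).orthogonalProjectionOnto m) : Ltwo) = v := by
    apply Submodule.eq_starProjection_of_mem_orthogonal hvK
    have : m - v = c • (fourierLp 2 (-1) : Ltwo) := by rw [hv]; abel
    rw [this]
    rw [Submodule.mem_orthogonal]
    intro x hx
    have hxH2 : x ∈ H2 := ((mem_KuSub_iff hu).mp hx).1
    rw [inner_smul_right, inner_fourierLp_neg_one_eq_zero hxH2, mul_zero]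
  rw [hankel_apply, ← hm, hproj, hv]
  abel

/-- Claim B: the Hankel operator with symbol `z` is rank one. -/
lemma hankel_fourier_one_apply (g : KuSub u hu) :
    hankel u hu ⇑(fourier 1) (memLinfty_contMap (fourier 1)) g
      = (inner ℂ (uL2 hu)
          (mulCLM ⇑(fourier 1) (memLinfty_contMap (fourier 1)) (g : Ltwo)) : ℂ) • uL2 hu := by
  obtain ⟨hgH2, hgOrth⟩ := (mem_KuSub_iff hu).mp g.2
  set m : Ltwo := mulCLM ⇑(fourier 1) (memLinfty_contMap (fourier 1)) ((g : Ltwo)) with hm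
  set c : ℂ := (inner ℂ (uL2 hu) m : ℂ) with hc
  set v : Ltwo := m - c • uL2 hu with hv
  have huL2coeff : ∀ n : ℤ, n < 0 → fourierCoeff (⇑(uL2 hu)) n = 0 := by
    intro n hn
    rw [fourierCoeff_congr_ae (uL2_coeFn hu)]
    exact hu.negCoeff n hn
  have hvH2 : v ∈ H2 := by
    rw [mem_H2_iff]
    intro n hn
    rw [hv, fourierCoeff_sub, fourierCoeff_smul, hm, fourierCoeff_mulCLM_fourier,
      mem_H2_iff.mp hgH2 (n - 1) (by omega), huL2coeff n hn, mul_zero, sub_zero]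
  have hvK : v ∈ KuSub u hu := by
    rw [mem_KuSub_iff hu]
    refine ⟨hvH2, fun h hh => ?_⟩
    rw [hv, inner_sub_right, inner_smul_right]
    -- ⟪M_u h, uL2⟫ = conj (ĥ(0))
    have huu : (inner ℂ (mulCLM u hu.memLinfty h) (uL2 hu) : ℂ) = conj (fourierCoeff (⇑h) 0) := by
      rw [show uL2 hu = mulCLM u hu.memLinfty (fourierLp 2 0) from rfl, inner_mulCLM_u hu,
        ← inner_conj_symm (𝕜 := ℂ), inner_fourierLp]
    set d : ℂ := fourierCoeff (⇑h) 0 with hd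
    set h' : Ltwo := h - d • (fourierLp 2 0 : Ltwo) with hh'
    have hsplit : mulCLM u hu.memLinfty h
        = mulCLM u hu.memLinfty h' + d • uL2 hu := by
      rw [hh', map_sub, _root_.map_smul,
        show uL2 hu = mulCLM u hu.memLinfty (fourierLp 2 0) from rfl]
      abel
    have hMh' : (inner ℂ (mulCLM u hu.memLinfty h') m : ℂ) = 0 := by
      rw [hm, inner_mulCLM_right]
      have hsym : (fun θ => conj (fourier 1 θ)) = ⇑(fourier (T := 2 * Real.pi) (-1)) := by
        funext θ
        rw [show ((-1 : ℤ)) = -(1 : ℤ) by norm_num, fourier_neg]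
      rw [mulCLM_congr _ (memLinfty_contMap (fourier (-1))) hsym]
      have hcomm : mulCLM ⇑(fourier (-1)) (memLinfty_contMap (fourier (-1)))
            ((mulCLM u hu.memLinfty) h')
          = (mulCLM u hu.memLinfty)
              (mulCLM ⇑(fourier (-1)) (memLinfty_contMap (fourier (-1))) h') := by
        have e1 := mulCLM_comp (memLinfty_contMap (fourier (-1))) hu.memLinfty
        have e2 := mulCLM_comp hu.memLinfty (memLinfty_contMap (fourier (-1)))
        have e3 : (fun θ => fourier (-1) θ * u θ) = fun θ => u θ * fourier (-1) θ := by
          funext θ; ring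
        have := e1.trans ((mulCLM_congr _ _ e3).trans e2.symm)
        exact DFunLike.congr_fun this h'
      rw [hcomm]
      apply hgOrth
      rw [mem_H2_iff]
      intro n hn
      rw [fourierCoeff_mulCLM_fourier, hh', fourierCoeff_sub, fourierCoeff_smul,
        fourierCoeff_fourierLp]
      rcases eq_or_ne n (-1) with h1 | h1
      · subst h1; norm_num [← hd]
      · rw [if_neg (by omega), mul_zero, mem_H2_iff.mp hh (n - -1) (by omega), sub_zero]
    have : (inner ℂ (mulCLM u hu.memLinfty h) m : ℂ) = conj d * c := by
      rw [hsplit, inner_add_left, hMh', inner_smul_left, ← hc, zero_add]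
    rw [this, huu]
    ring
  have hproj : (↑((KuSub u hu).orthogonalProjectionOnto m) : Ltwo) = v := by
    apply Submodule.eq_starProjection_of_mem_orthogonal hvK
    have : m - v = c • uL2 hu := by rw [hv]; abel
    rw [this, Submodule.mem_orthogonal]
    intro x hx
    obtain ⟨hxH2, hxOrth⟩ := (mem_KuSub_iff hu).mp hx
    rw [inner_smul_right, ← inner_conj_symm,
      show uL2 hu = mulCLM u hu.memLinfty (fourierLp 2 0) from rfl,
      hxOrth _ (mem_H2_fourierLp le_rfl), map_zero, mul_zero]
  rw [hankel_apply, ← hm, hproj, hv]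
  abel

end Claims
section Compactness

variable {u : T2π → ℂ} (hu : IsInner u)

/-- A rank-one operator is compact. -/
lemma isCompactOperator_rankOne {X Y : Type*} [NormedAddCommGroup X] [NormedSpace ℂ X]
    [NormedAddCommGroup Y] [NormedSpace ℂ Y] (φ : X →L[ℂ] ℂ) (y : Y) :
    IsCompactOperator (fun x : X => φ x • y) := by
  refine ⟨(fun c : ℂ => c • y) '' Metric.closedBall 0 (‖φ‖ + 1),
    (isCompact_closedBall _ _).image (continuous_id.smul continuous_const), ?_⟩
  refine Filter.mem_of_superset (Metric.ball_mem_nhds 0 one_pos) ?_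
  intro x hx
  refine ⟨φ x, ?_, rfl⟩
  rw [Metric.mem_closedBall, dist_zero_right]
  calc ‖φ x‖ ≤ ‖φ‖ * ‖x‖ := φ.le_opNorm x
    _ ≤ ‖φ‖ * 1 := by
        refine mul_le_mul_of_nonneg_left ?_ (norm_nonneg _)
        rw [Metric.mem_ball, dist_zero_right] at hx
        exact hx.le
    _ ≤ ‖φ‖ + 1 := by linarith [norm_nonneg φ]

lemma hankel_neg_one_compact :
    IsCompactOperator ⇑(hankel u hu ⇑(fourier (-1)) (memLinfty_contMap (fourier (-1)))) := by
  have heq : ⇑(hankel u hu ⇑(fourier (-1)) (memLinfty_contMap (fourier (-1))))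
      = fun g : KuSub u hu =>
          (((innerSL ℂ (fourierLp 2 0 : Ltwo)) ∘L (KuSub u hu).subtypeL) g)
            • (fourierLp 2 (-1) : Ltwo) := by
    funext g
    rw [hankel_fourier_neg_one_apply hu g]
    congr 1
    rw [ContinuousLinearMap.comp_apply, Submodule.subtypeL_apply]
    exact (inner_fourierLp 0 _).symm
  rw [heq]
  exact isCompactOperator_rankOne _ _

lemma hankel_one_compact :
    IsCompactOperator ⇑(hankel u hu ⇑(fourier 1) (memLinfty_contMap (fourier 1))) := by
  have heq : ⇑(hankel u hu ⇑(fourier 1) (memLinfty_contMap (fourier 1)))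
      = fun g : KuSub u hu =>
          (((innerSL ℂ (uL2 hu)) ∘L
            ((mulCLM ⇑(fourier 1) (memLinfty_contMap (fourier 1))) ∘L
              (KuSub u hu).subtypeL)) g) • uL2 hu := by
    funext g
    rw [hankel_fourier_one_apply hu g]
    rfl
  rw [heq]
  exact isCompactOperator_rankOne _ _

lemma hankel_zero :
    hankel u hu ⇑(fourier 0) (memLinfty_contMap (fourier 0)) = 0 := by
  refine ContinuousLinearMap.ext fun g => ?_
  have h1 : mulCLM ⇑(fourier 0) (memLinfty_contMap (fourier 0)) ((g : Ltwo)) = (g : Ltwo) := by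
    apply MeasureTheory.Lp.ext
    filter_upwards [mulCLM_coeFn (memLinfty_contMap (fourier 0)) ((g : Ltwo))] with t ht
    rw [ht, fourier_zero, one_mul]
  rw [hankel_apply, h1]
  have h2 : (KuSub u hu).orthogonalProjectionOnto ((g : Ltwo)) = g :=
    Submodule.orthogonalProjectionOnto_mem_subspace_eq_self g
  rw [h2, sub_self]
  rfl

/-- The fundamental algebraic identity for Hankel operators of products. -/
lemma hankel_mul_eq {φ ψ : T2π → ℂ} (hφ : MemLp φ ⊤ μ) (hψ : MemLp ψ ⊤ μ) :
    hankel u hu (fun θ => φ θ * ψ θ) (memLinfty_mul hφ hψ)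
      = hankel u hu φ hφ ∘L TTOp u hu ψ hψ
        + ((ContinuousLinearMap.id ℂ Ltwo
            - (KuSub u hu).subtypeL ∘L (KuSub u hu).orthogonalProjectionOnto) ∘L mulCLM φ hφ)
          ∘L hankel u hu ψ hψ := by
  unfold hankel TTOp
  rw [← mulCLM_comp hφ hψ]
  refine ContinuousLinearMap.ext fun g => ?_
  simp only [ContinuousLinearMap.comp_apply, ContinuousLinearMap.add_apply,
    ContinuousLinearMap.sub_apply, ContinuousLinearMap.id_apply, Submodule.subtypeL_apply,
    map_sub]
  abel

lemma hankel_mul_compact {φ ψ : T2π → ℂ} (hφ : MemLp φ ⊤ μ) (hψ : MemLp ψ ⊤ μ)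
    (h1 : IsCompactOperator ⇑(hankel u hu φ hφ))
    (h2 : IsCompactOperator ⇑(hankel u hu ψ hψ)) :
    IsCompactOperator ⇑(hankel u hu (fun θ => φ θ * ψ θ) (memLinfty_mul hφ hψ)) := by
  rw [hankel_mul_eq hu hφ hψ]
  have hA : IsCompactOperator ⇑(hankel u hu φ hφ ∘L TTOp u hu ψ hψ) := by
    rw [ContinuousLinearMap.coe_comp']
    exact h1.comp_clm (TTOp u hu ψ hψ)
  have hB : IsCompactOperator
      ⇑((((ContinuousLinearMap.id ℂ Ltwo
          - (KuSub u hu).subtypeL ∘L (KuSub u hu).orthogonalProjectionOnto) ∘L mulCLM φ hφ))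
        ∘L hankel u hu ψ hψ) := by
    rw [ContinuousLinearMap.coe_comp']
    exact h2.clm_comp _
  have := hA.add hB
  convert this using 1
  all_goals rfl

lemma hankel_fourier_compact (n : ℤ) :
    IsCompactOperator ⇑(hankel u hu ⇑(fourier n) (memLinfty_contMap (fourier n))) := by
  induction n using Int.induction_on with
  | zero =>
      rw [hankel_zero hu]
      exact isCompactOperator_zero
  | succ k ih =>
      have hmul := hankel_mul_compact hu (memLinfty_contMap (fourier (k : ℤ)))
        (memLinfty_contMap (fourier 1)) ih (hankel_one_compact hu)
      have hsym : (fun θ => fourier (k : ℤ) θ * fourier 1 θ)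
          = ⇑(fourier (T := 2 * Real.pi) ((k : ℤ) + 1)) := by
        funext θ; rw [fourier_add]
      have := mulCLM_congr (memLinfty_mul (memLinfty_contMap (fourier (k : ℤ)))
        (memLinfty_contMap (fourier 1))) (memLinfty_contMap (fourier ((k : ℤ) + 1))) hsym
      unfold hankel at hmul ⊢
      rwa [this] at hmul
  | pred k ih =>
      have hmul := hankel_mul_compact hu (memLinfty_contMap (fourier (-(k : ℤ))))
        (memLinfty_contMap (fourier (-1))) ih (hankel_neg_one_compact hu)
      have hsym : (fun θ => fourier (-(k : ℤ)) θ * fourier (-1) θ)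
          = ⇑(fourier (T := 2 * Real.pi) (-(k : ℤ) - 1)) := by
        funext θ; rw [show -(k : ℤ) - 1 = -(k : ℤ) + (-1) by ring, fourier_add]
      have := mulCLM_congr (memLinfty_mul (memLinfty_contMap (fourier (-(k : ℤ))))
        (memLinfty_contMap (fourier (-1)))) (memLinfty_contMap (fourier (-(k : ℤ) - 1))) hsym
      unfold hankel at hmul ⊢
      rwa [this] at hmul

end Compactness
section Closure

variable {u : T2π → ℂ} (hu : IsInner u)

lemma mulCLM_contMap_add (f g : C(T2π, ℂ)) :
    mulCLM ⇑(f + g) (memLinfty_contMap (f + g))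
      = mulCLM ⇑f (memLinfty_contMap f) + mulCLM ⇑g (memLinfty_contMap g) := by
  rw [mulCLM_congr (memLinfty_contMap (f + g))
    ((memLinfty_contMap f).add (memLinfty_contMap g))
    (funext fun θ => rfl : ⇑(f + g) = fun θ => f θ + g θ)]
  exact mulCLM_add _ _

lemma mulCLM_contMap_smul (c : ℂ) (f : C(T2π, ℂ)) :
    mulCLM ⇑(c • f) (memLinfty_contMap (c • f)) = c • mulCLM ⇑f (memLinfty_contMap f) := by
  rw [mulCLM_congr (memLinfty_contMap (c • f))
    (by simpa using (memLinfty_contMap f).const_mul c)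
    (funext fun θ => rfl : ⇑(c • f) = fun θ => c * f θ)]
  exact mulCLM_smul _ _

lemma hankel_contMap_add (f g : C(T2π, ℂ)) :
    hankel u hu ⇑(f + g) (memLinfty_contMap (f + g))
      = hankel u hu ⇑f (memLinfty_contMap f) + hankel u hu ⇑g (memLinfty_contMap g) := by
  unfold hankel
  rw [mulCLM_contMap_add]
  rw [ContinuousLinearMap.comp_add, ContinuousLinearMap.add_comp]

lemma hankel_contMap_smul (c : ℂ) (f : C(T2π, ℂ)) :
    hankel u hu ⇑(c • f) (memLinfty_contMap (c • f))
      = c • hankel u hu ⇑f (memLinfty_contMap f) := by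
  unfold hankel
  rw [mulCLM_contMap_smul]
  rw [ContinuousLinearMap.comp_smul, ContinuousLinearMap.smul_comp]

/-- The Hankel operator as a linear map in the (continuous) symbol. -/
def hankelL : C(T2π, ℂ) →ₗ[ℂ] (KuSub u hu →L[ℂ] Ltwo) where
  toFun f := hankel u hu ⇑f (memLinfty_contMap f)
  map_add' f g := hankel_contMap_add hu f g
  map_smul' c f := hankel_contMap_smul hu c f

lemma mulCLM_contMap_norm_le (f : C(T2π, ℂ)) :
    ‖mulCLM ⇑f (memLinfty_contMap f)‖ ≤ ‖f‖ := by
  refine (mulCLM_norm_le (memLinfty_contMap f)).trans ?_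
  refine ENNReal.toReal_le_of_le_ofReal (norm_nonneg f) ?_
  rw [eLpNorm_exponent_top]
  exact eLpNormEssSup_le_of_ae_bound
    (Filter.Eventually.of_forall fun θ => f.norm_coe_le_norm θ)

lemma hankelL_norm_le (f : C(T2π, ℂ)) : ‖hankelL hu f‖ ≤ 2 * ‖f‖ := by
  have h1 : ‖(ContinuousLinearMap.id ℂ Ltwo
      - (KuSub u hu).subtypeL ∘L (KuSub u hu).orthogonalProjectionOnto)‖ ≤ 2 := by
    refine (norm_sub_le _ _).trans ?_
    have h2 : ‖(KuSub u hu).subtypeL ∘L (KuSub u hu).orthogonalProjectionOnto‖ ≤ 1 := by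
      refine (ContinuousLinearMap.opNorm_comp_le _ _).trans ?_
      calc ‖(KuSub u hu).subtypeL‖ * ‖(KuSub u hu).orthogonalProjectionOnto‖
          ≤ 1 * 1 := mul_le_mul (Submodule.norm_subtypeL_le _) (Submodule.orthogonalProjectionOnto_norm_le _)
            (norm_nonneg _) zero_le_one
        _ = 1 := one_mul 1
    calc ‖ContinuousLinearMap.id ℂ Ltwo‖
          + ‖(KuSub u hu).subtypeL ∘L (KuSub u hu).orthogonalProjectionOnto‖
        ≤ 1 + 1 := add_le_add ContinuousLinearMap.norm_id_le h2
      _ = 2 := by norm_num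
  show ‖hankel u hu ⇑f (memLinfty_contMap f)‖ ≤ 2 * ‖f‖
  unfold hankel
  refine (ContinuousLinearMap.opNorm_comp_le _ _).trans ?_
  calc ‖(ContinuousLinearMap.id ℂ Ltwo
        - (KuSub u hu).subtypeL ∘L (KuSub u hu).orthogonalProjectionOnto) ∘L
          mulCLM ⇑f (memLinfty_contMap f)‖ * ‖(KuSub u hu).subtypeL‖
      ≤ ‖(ContinuousLinearMap.id ℂ Ltwo
        - (KuSub u hu).subtypeL ∘L (KuSub u hu).orthogonalProjectionOnto) ∘L
          mulCLM ⇑f (memLinfty_contMap f)‖ * 1 :=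
        mul_le_mul_of_nonneg_left (Submodule.norm_subtypeL_le _) (norm_nonneg _)
    _ = ‖(ContinuousLinearMap.id ℂ Ltwo
        - (KuSub u hu).subtypeL ∘L (KuSub u hu).orthogonalProjectionOnto) ∘L
          mulCLM ⇑f (memLinfty_contMap f)‖ := mul_one _
    _ ≤ ‖(ContinuousLinearMap.id ℂ Ltwo
        - (KuSub u hu).subtypeL ∘L (KuSub u hu).orthogonalProjectionOnto)‖
          * ‖mulCLM ⇑f (memLinfty_contMap f)‖ := ContinuousLinearMap.opNorm_comp_le _ _
    _ ≤ 2 * ‖f‖ := mul_le_mul h1 (mulCLM_contMap_norm_le f) (norm_nonneg _) (by norm_num)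

/-- The Hankel operator as a continuous linear map in the symbol. -/
def hankelCLM : C(T2π, ℂ) →L[ℂ] (KuSub u hu →L[ℂ] Ltwo) :=
  (hankelL hu).mkContinuous 2 (hankelL_norm_le hu)

/-- For every continuous symbol, the Hankel-type operator is compact. -/
lemma hankel_contMap_compact (f : C(T2π, ℂ)) :
    IsCompactOperator ⇑(hankel u hu ⇑f (memLinfty_contMap f)) := by
  set Sub : Submodule ℂ C(T2π, ℂ) :=
    (compactOperator (RingHom.id ℂ) (KuSub u hu) Ltwo).comap (hankelL hu) with hSub
  have hclosed : IsClosed (Sub : Set C(T2π, ℂ)) := by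
    have : (Sub : Set C(T2π, ℂ))
        = ⇑(hankelCLM hu) ⁻¹' {T : KuSub u hu →L[ℂ] Ltwo | IsCompactOperator T} := rfl
    rw [this]
    exact isClosed_setOf_isCompactOperator.preimage (hankelCLM hu).continuous
  have hspan : Submodule.span ℂ (Set.range (fourier (T := 2 * Real.pi))) ≤ Sub := by
    rw [Submodule.span_le]
    rintro - ⟨n, rfl⟩
    show IsCompactOperator ⇑(hankelL hu (fourier n))
    exact hankel_fourier_compact hu n
  have htop : (⊤ : Submodule ℂ C(T2π, ℂ)) ≤ Sub := by
    rw [← span_fourier_closure_eq_top]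
    exact Submodule.topologicalClosure_minimal _ hspan hclosed
  exact htop (Submodule.mem_top (x := f))

/-- The semicommutator identity. -/
lemma semicom_eq {φ ψ : T2π → ℂ} (hφ : MemLp φ ⊤ μ) (hψ : MemLp ψ ⊤ μ) :
    TTOp u hu φ hφ * TTOp u hu ψ hψ - TTOp u hu (fun θ => φ θ * ψ θ) (memLinfty_mul hφ hψ)
      = -(((KuSub u hu).orthogonalProjectionOnto ∘L mulCLM φ hφ) ∘L hankel u hu ψ hψ) := by
  unfold TTOp hankel
  rw [← mulCLM_comp hφ hψ]
  refine ContinuousLinearMap.ext fun g => ?_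
  simp only [ContinuousLinearMap.mul_apply, ContinuousLinearMap.comp_apply,
    ContinuousLinearMap.sub_apply, ContinuousLinearMap.neg_apply,
    ContinuousLinearMap.id_apply, Submodule.subtypeL_apply, map_sub]
  abel

lemma TTOp_congr {φ ψ : T2π → ℂ} (hφ : MemLp φ ⊤ μ) (hψ : MemLp ψ ⊤ μ) (h : φ = ψ) :
    TTOp u hu φ hφ = TTOp u hu ψ hψ := by subst h; rfl

lemma semicom_compact (φ ψ : C(T2π, ℂ)) :
    IsCompactOperator ⇑(TTOp u hu ⇑φ (memLinfty_contMap φ) * TTOp u hu ⇑ψ (memLinfty_contMap ψ)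
      - TTOp u hu (fun θ => φ θ * ψ θ)
          (memLinfty_mul (memLinfty_contMap φ) (memLinfty_contMap ψ))) := by
  rw [semicom_eq hu]
  rw [ContinuousLinearMap.coe_neg']
  apply IsCompactOperator.neg
  rw [ContinuousLinearMap.coe_comp']
  exact (hankel_contMap_compact hu ψ).clm_comp _

end Closure
/-- For continuous symbols `φ, ψ`, the semicommutator
`A_φ^u A_ψ^u - A_{φψ}^u` is compact; in particular the commutator `[A_φ^u, A_ψ^u]` is
compact. -/
theorem semicommutator_compact_of_continuous (u : T2π → ℂ) (hu : IsInner u)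
    (φ ψ : C(T2π, ℂ)) :
    IsCompactOperator ⇑(TTOp u hu ⇑φ (memLinfty_contMap φ) * TTOp u hu ⇑ψ (memLinfty_contMap ψ)
      - TTOp u hu (fun θ => φ θ * ψ θ)
          (memLinfty_mul (memLinfty_contMap φ) (memLinfty_contMap ψ))) ∧
    IsCompactOperator ⇑(TTOp u hu ⇑φ (memLinfty_contMap φ) * TTOp u hu ⇑ψ (memLinfty_contMap ψ)
      - TTOp u hu ⇑ψ (memLinfty_contMap ψ) * TTOp u hu ⇑φ (memLinfty_contMap φ)) := by
  refine ⟨semicom_compact hu φ ψ, ?_⟩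
  have e1 := semicom_compact hu φ ψ
  have e2 := semicom_compact hu ψ φ
  have heq : TTOp u hu (fun θ => ψ θ * φ θ)
        (memLinfty_mul (memLinfty_contMap ψ) (memLinfty_contMap φ))
      = TTOp u hu (fun θ => φ θ * ψ θ)
        (memLinfty_mul (memLinfty_contMap φ) (memLinfty_contMap ψ)) :=
    TTOp_congr hu _ _ (funext fun θ => mul_comm _ _)
  rw [heq] at e2
  have := e1.sub e2
  have hcoe :
      (⇑(TTOp u hu ⇑φ (memLinfty_contMap φ) * TTOp u hu ⇑ψ (memLinfty_contMap ψ)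
        - TTOp u hu (fun θ => φ θ * ψ θ)
            (memLinfty_mul (memLinfty_contMap φ) (memLinfty_contMap ψ)))
      - ⇑(TTOp u hu ⇑ψ (memLinfty_contMap ψ) * TTOp u hu ⇑φ (memLinfty_contMap φ)
        - TTOp u hu (fun θ => φ θ * ψ θ)
            (memLinfty_mul (memLinfty_contMap φ) (memLinfty_contMap ψ))))
      = ⇑(TTOp u hu ⇑φ (memLinfty_contMap φ) * TTOp u hu ⇑ψ (memLinfty_contMap ψ)
        - TTOp u hu ⇑ψ (memLinfty_contMap ψ) * TTOp u hu ⇑φ (memLinfty_contMap φ)) := by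
    funext g
    simp only [Pi.sub_apply, ContinuousLinearMap.sub_apply]
    abel
  rwa [hcoe] at this
end TTOPaper
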